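/- (Hausdorff paradox) There is a countable subset D of the unit sphere S² in ℝ³ such that S² \ D is SO(3)-paradoxical. -/

import Mathlib

open scoped Pointwise

/-- `A` and `B` are `G`-equidecomposable: there are finite partitions
`A = A₁ ∪ … ∪ Aₙ` and `B = B₁ ∪ … ∪ Bₙ` into pairwise disjoint pieces and
`g₁, …, gₙ ∈ G` with `Bᵢ = gᵢ • Aᵢ`. -/
def Equidecomposable (G : Type*) {X : Type*} [Group G] [MulAction G X] (A B : Set X) : Prop :=
  ∃ (n : ℕ) (P : Fin n → Set X) (g : Fin n → G),
    Pairwise (Function.onFun Disjoint P) ∧ (⋃ i, P i) = A ∧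
    Pairwise (Function.onFun Disjoint fun i => g i • P i) ∧ (⋃ i, g i • P i) = B

/-- `E` is `G`-paradoxical: `E` is nonempty and splits into two disjoint pieces,
each `G`-equidecomposable with `E`. -/
def Paradoxical (G : Type*) {X : Type*} [Group G] [MulAction G X] (E : Set X) : Prop :=
  E.Nonempty ∧ ∃ A B : Set X, A ∪ B = E ∧ Disjoint A B ∧
    Equidecomposable G A E ∧ Equidecomposable G B E

abbrev E3 : Type := EuclideanSpace ℝ (Fin 3)
abbrev SO3 : Type := Matrix.specialOrthogonalGroup (Fin 3) ℝ

noncomputable instance : Group SO3 :=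
  { (inferInstance : Monoid SO3) with
    inv := fun A => ⟨star A.1, by
      refine ⟨Unitary.star_mem A.2.1, ?_⟩
      show (star A.1).det = 1
      have h : A.1.det = 1 := A.2.2
      rw [Matrix.star_eq_conjTranspose, Matrix.det_conjTranspose, h]
      simp⟩
    inv_mul_cancel := fun A => Subtype.ext (Matrix.mem_unitaryGroup_iff'.mp A.2.1) }

noncomputable instance : SMul SO3 E3 := ⟨fun g x => WithLp.toLp 2 (g.1.mulVec (WithLp.ofLp x))⟩

/-- `SO3` acts on `ℝ³` by rotation (matrix-vector multiplication). -/
noncomputable instance : MulAction SO3 E3 where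
  one_smul x := congrArg (WithLp.toLp 2) (Matrix.one_mulVec (WithLp.ofLp x))
  mul_smul g h x := congrArg (WithLp.toLp 2) (Matrix.mulVec_mulVec (WithLp.ofLp x) g.1 h.1).symm

lemma SO3.smul_add (g : SO3) (x y : E3) : g • (x + y) = g • x + g • y :=
  congrArg (WithLp.toLp 2) (Matrix.mulVec_add g.1 (WithLp.ofLp x) (WithLp.ofLp y))

lemma SO3.smul_neg (g : SO3) (x : E3) : g • (-x) = -(g • x) :=
  congrArg (WithLp.toLp 2) (Matrix.mulVec_neg (WithLp.ofLp x) g.1)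

noncomputable section

open Real Matrix

abbrev s2 : ℝ := Real.sqrt 2

lemma s2_mul_s2 : s2 * s2 = 2 := Real.mul_self_sqrt (by norm_num)

def Am : Matrix (Fin 3) (Fin 3) ℝ :=
  !![1/3, -(2*s2)/3, 0; (2*s2)/3, 1/3, 0; 0, 0, 1]

def Bm : Matrix (Fin 3) (Fin 3) ℝ :=
  !![1, 0, 0; 0, 1/3, -(2*s2)/3; 0, (2*s2)/3, 1/3]

lemma Am_mem : Am ∈ Matrix.specialOrthogonalGroup (Fin 3) ℝ := by
  constructor
  · show Am ∈ Matrix.unitaryGroup (Fin 3) ℝ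
    rw [Matrix.mem_unitaryGroup_iff']
    show Am.conjTranspose * Am = 1
    have h := s2_mul_s2
    ext i j
    fin_cases i <;> fin_cases j <;>
      simp [Am, Matrix.mul_apply, Fin.sum_univ_three, Matrix.conjTranspose_apply,
        Matrix.transpose_apply, Matrix.one_apply, Matrix.vecHead, Matrix.vecTail] <;> nlinarith [h]
  · show Am.det = 1
    have h := s2_mul_s2
    rw [Matrix.det_fin_three]
    simp [Am]
    nlinarith [h]

lemma Bm_mem : Bm ∈ Matrix.specialOrthogonalGroup (Fin 3) ℝ := by
  constructor
  · show Bm ∈ Matrix.unitaryGroup (Fin 3) ℝ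
    rw [Matrix.mem_unitaryGroup_iff']
    show Bm.conjTranspose * Bm = 1
    have h := s2_mul_s2
    ext i j
    fin_cases i <;> fin_cases j <;>
      simp [Bm, Matrix.mul_apply, Fin.sum_univ_three, Matrix.conjTranspose_apply,
        Matrix.transpose_apply, Matrix.one_apply, Matrix.vecHead, Matrix.vecTail] <;> nlinarith [h]
  · show Bm.det = 1
    have h := s2_mul_s2
    rw [Matrix.det_fin_three]
    simp [Bm]
    nlinarith [h]

def Ael : SO3 := ⟨Am, Am_mem⟩
def Bel : SO3 := ⟨Bm, Bm_mem⟩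

abbrev Ltr := Bool × Bool

def gen : Bool → SO3 := fun i => if i then Ael else Bel

def ρ (x : Ltr) : SO3 := cond x.2 (gen x.1) (gen x.1)⁻¹

def stp : Ltr → ℤ × ℤ × ℤ → ℤ × ℤ × ℤ
  | (true, true), (x, y, z) => (x - 4*y, y + 2*x, 3*z)
  | (true, false), (x, y, z) => (x + 4*y, y - 2*x, 3*z)
  | (false, true), (x, y, z) => (3*x, y - 2*z, z + 4*y)
  | (false, false), (x, y, z) => (3*x, y + 2*z, z - 4*y)

def ψ (v : ℤ × ℤ × ℤ) (n : ℕ) : E3 :=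
  WithLp.toLp 2 ![(v.1 : ℝ) / 3^n, (v.2.1 : ℝ) * s2 / 3^n, (v.2.2 : ℝ) / 3^n]

lemma inv_matrix (g : SO3) : (g⁻¹).1 = star g.1 := rfl

lemma rho_psi (x : Ltr) (v : ℤ × ℤ × ℤ) (n : ℕ) :
    ρ x • ψ v n = ψ (stp x v) (n + 1) := by
  obtain ⟨X, Y, Z⟩ := v
  have h2 : s2 ^ 2 = 2 := by rw [sq, s2_mul_s2]
  obtain ⟨i, b⟩ := x
  cases i <;> cases b <;>
  · show WithLp.toLp 2 ((_ : SO3).1.mulVec _) = _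
    ext j
    fin_cases j <;>
      simp [ρ, gen, inv_matrix, Ael, Bel, Am, Bm, ψ, stp, Matrix.mulVec, dotProduct,
        Fin.sum_univ_three, Matrix.conjTranspose_apply, Matrix.vecHead, Matrix.vecTail,
        pow_succ] <;>
      · field_simp
        try ring_nf
        try rw [h2]
        try ring
abbrev F2 : Type := FreeGroup Bool

def φ : F2 →* SO3 := FreeGroup.lift gen

lemma φ_mk (L : List Ltr) : φ (FreeGroup.mk L) = (L.map ρ).prod := by
  rw [φ, FreeGroup.lift_mk]; rfl

def R (x y : Ltr) : Prop := x.1 = y.1 → x.2 = y.2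

lemma reduce_of_chain : ∀ L : List Ltr, List.Chain' R L → FreeGroup.reduce L = L := by
  intro L
  induction L with
  | nil => intro; rfl
  | cons x M ih =>
    intro h
    rw [FreeGroup.reduce.cons, ih h.tail]
    cases M with
    | nil => rfl
    | cons y K =>
      have hR : R x y := List.isChain_cons_cons.mp h |>.1
      have : ¬(x.1 = y.1 ∧ x.2 = !y.2) := by
        rintro ⟨h1, h2⟩
        rw [hR h1] at h2
        simp at h2
      simp [this]

lemma chain_of_reduce : ∀ L : List Ltr, FreeGroup.reduce L = L → List.Chain' R L := by
  intro L
  induction L with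
  | nil => intro; exact List.isChain_nil
  | cons x M ih =>
    intro h
    have hlen := FreeGroup.Red.length_le (FreeGroup.reduce.red (L := M))
    rw [FreeGroup.reduce.cons] at h
    have hM : FreeGroup.reduce M = M := by
      cases hr : FreeGroup.reduce M with
      | nil =>
        rw [hr] at h
        cases M with
        | nil => rfl
        | cons y K => simp at h
      | cons y K =>
        rw [hr] at h
        by_cases hc : x.1 = y.1 ∧ x.2 = !y.2
        · simp only [if_pos hc] at h
          have h1 : K.length = M.length + 1 := by
            have := congrArg List.length h; simpa using this
          have h2 : (y :: K).length ≤ M.length := by rw [← hr]; exact hlen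
          simp at h2; omega
        · simp only [if_neg hc] at h
          have : M = y :: K := by
            have := congrArg List.tail h; simpa using this.symm
          rw [this, ← hr, this]
      
    rw [hM] at h
    cases M with
    | nil => exact List.isChain_singleton x
    | cons y K =>
      by_cases hc : x.1 = y.1 ∧ x.2 = !y.2
      · simp only [if_pos hc] at h
        have := congrArg List.length h; simp at this; omega
      · refine List.isChain_cons_cons.mpr ⟨?_, ih hM⟩
        intro h1
        rcases hc with hc
        by_contra h2
        exact hc ⟨h1, by cases x.2 <;> cases y.2 <;> simp_all⟩

lemma toWord_chain (w : F2) : List.Chain' R w.toWord :=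
  chain_of_reduce _ (FreeGroup.reduce_toWord w)

def ini (x : Ltr) : ℤ × ℤ × ℤ := if x.1 then (1, 0, 0) else (0, 0, 1)

def Inv3 : Ltr → ℤ × ℤ × ℤ → Prop
  | (true, b), (x, y, z) => ¬(3 ∣ y) ∧ 3 ∣ z ∧ 3 ∣ ((if b then 1 else -1) * x + y)
  | (false, b), (x, y, z) => ¬(3 ∣ y) ∧ 3 ∣ x ∧ 3 ∣ ((if b then 1 else -1) * z - y)

lemma base_inv (t : Ltr) : Inv3 t (stp t (ini t)) := by
  obtain ⟨i, b⟩ := t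
  cases i <;> cases b <;> simp [Inv3, stp, ini] <;> decide

lemma step_inv {s t : Ltr} {v : ℤ × ℤ × ℤ} (hv : Inv3 s v) (hR : R t s) :
    Inv3 t (stp t v) := by
  obtain ⟨X, Y, Z⟩ := v
  obtain ⟨i, b⟩ := s
  obtain ⟨j, c⟩ := t
  cases i <;> cases b <;> cases j <;> cases c <;>
    simp_all [Inv3, stp, R] <;> omega

lemma chain_inv : ∀ (L : List Ltr) (t : Ltr), List.Chain' R (t :: L) →
    Inv3 t (List.foldr stp (ini ((t :: L).getLastD t)) (t :: L)) := by
  intro L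
  induction L with
  | nil => intro t _; simpa using base_inv t
  | cons s M ih =>
    intro t h
    have h1 : List.Chain' R (s :: M) := h.tail
    have h2 : R t s := (List.isChain_cons_cons.mp h).1
    have hg : (t :: s :: M).getLastD t = (s :: M).getLastD s := by
      rw [List.getLastD_cons, List.getLastD_cons, List.getLastD_cons]
    rw [hg]
    have := ih s h1
    exact step_inv this h2
lemma Inv3_y {t : Ltr} {v : ℤ × ℤ × ℤ} (h : Inv3 t v) : ¬ (3:ℤ) ∣ v.2.1 := by
  obtain ⟨i, b⟩ := t
  obtain ⟨x, y, z⟩ := v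
  cases i <;> exact h.1

lemma prod_psi : ∀ (L : List Ltr) (v : ℤ × ℤ × ℤ) (n : ℕ),
    ((L.map ρ).prod) • ψ v n = ψ (L.foldr stp v) (n + L.length) := by
  intro L
  induction L with
  | nil => intro v n; simp [one_smul]
  | cons x M ih =>
    intro v n
    rw [List.map_cons, List.prod_cons, mul_smul, ih, rho_psi]
    have : n + (x :: M).length = n + M.length + 1 := by simp; omega
    rw [this]
    rfl

lemma phi_ne_one (w : F2) (hw : w ≠ 1) : φ w ≠ 1 := by
  intro h1
  cases hL : w.toWord with
  | nil => exact hw (FreeGroup.toWord_eq_nil_iff.mp hL)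
  | cons t M =>
    have hch : List.Chain' R (t :: M) := hL ▸ toWord_chain w
    have hinv := chain_inv M t hch
    set v₀ := ini ((t :: M).getLastD t) with hv
    have h2 : φ w • ψ v₀ 0 = ψ (List.foldr stp v₀ (t :: M)) (0 + (t :: M).length) := by
      conv_lhs => rw [← FreeGroup.mk_toWord (x := w), hL]
      rw [φ_mk, prod_psi]
    rw [h1, one_smul] at h2
    have h3 := congrArg (· 1) h2
    have hy0 : v₀.2.1 = 0 := by
      rw [hv]; unfold ini; split <;> rfl
    have hyn : ¬ (3:ℤ) ∣ (List.foldr stp v₀ (t :: M)).2.1 := Inv3_y hinv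
    have hne : (List.foldr stp v₀ (t :: M)).2.1 ≠ 0 := by
      intro h0; rw [h0] at hyn; exact hyn ⟨0, by ring⟩
    have : (ψ v₀ 0) 1 = 0 := by simp [ψ, hy0]
    rw [this] at h3
    have : (ψ (List.foldr stp v₀ (t :: M)) (0 + (t :: M).length)) 1 = 0 := h3.symm
    simp only [ψ, PiLp.toLp_apply] at this
    have hs2 : s2 ≠ 0 := by positivity
    have h3n : ((3:ℝ)^(0 + (t :: M).length)) ≠ 0 := by positivity
    rw [Matrix.cons_val_one] at this
    simp [Matrix.vecHead, div_eq_zero_iff, hs2, h3n] at this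
    exact hne (by exact_mod_cast this)

lemma φ_inj : Function.Injective φ := by
  intro u v h
  by_contra hne
  have : u * v⁻¹ ≠ 1 := by
    intro h1; exact hne (mul_inv_eq_one.mp h1)
  exact phi_ne_one _ this (by rw [_root_.map_mul, map_inv, h, mul_inv_cancel])
def W (σ : Ltr) : Set F2 := {w | w.toWord.head? = some σ}

lemma mem_W {w : F2} {σ : Ltr} : w ∈ W σ ↔ w.toWord.head? = some σ := Iff.rfl

def a0 : F2 := FreeGroup.of true
def b0 : F2 := FreeGroup.of false

def Cset : Set F2 := {w | ∃ n : ℕ, w = a0⁻¹ ^ n}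

lemma toWord_a0_inv_pow (n : ℕ) : (a0⁻¹ ^ n).toWord = List.replicate n (true, false) := by
  rw [a0, inv_pow, FreeGroup.toWord_inv, FreeGroup.toWord_of_pow]
  simp [FreeGroup.invRev]

lemma inv_of_eq (i : Bool) : (FreeGroup.of i)⁻¹ = FreeGroup.mk [(i, false)] := by
  rw [FreeGroup.of, FreeGroup.inv_mk]; rfl

lemma cons_mul {σ : Ltr} {w : F2} (h : w.toWord.head? ≠ some (σ.1, !σ.2)) :
    (FreeGroup.mk [σ] * w).toWord = σ :: w.toWord := by
  conv_lhs => rw [← FreeGroup.mk_toWord (x := w)]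
  rw [FreeGroup.mul_mk]
  show (FreeGroup.mk (σ :: w.toWord)).toWord = _
  rw [FreeGroup.toWord_mk]
  apply reduce_of_chain
  cases hT : w.toWord with
  | nil => exact List.isChain_singleton σ
  | cons y K =>
    refine List.isChain_cons_cons.mpr ⟨?_, hT ▸ toWord_chain w⟩
    intro h1
    by_contra h2
    have hy : y = (σ.1, !σ.2) := by
      obtain ⟨a, c⟩ := σ; obtain ⟨d, e⟩ := y
      simp only at h1 h2
      cases c <;> cases e <;> simp_all
    exact h (by rw [hT, hy]; rfl)

lemma mem_W_iff (i : Bool) (u : F2) :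
    (FreeGroup.of i)⁻¹ * u ∈ W (i, false) ↔ u ∉ W (i, true) := by
  constructor
  · intro hL hu
    -- u starts with (i,true)
    cases hT : u.toWord with
    | nil => rw [mem_W, hT] at hu; simp at hu
    | cons y K =>
      have hy : y = (i, true) := by
        rw [mem_W, hT] at hu; simpa using hu
      subst hy
      have hu2 : u = FreeGroup.of i * FreeGroup.mk K := by
        rw [← FreeGroup.mk_toWord (x := u), hT, FreeGroup.of, FreeGroup.mul_mk]; rfl
      have hch : List.Chain' R ((i, true) :: K) := hT ▸ toWord_chain u
      have hK : (FreeGroup.mk K).toWord = K := by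
        rw [FreeGroup.toWord_mk]; exact reduce_of_chain K hch.tail
      have : (FreeGroup.of i)⁻¹ * u = FreeGroup.mk K := by
        rw [hu2, ← mul_assoc, inv_mul_cancel, one_mul]
      rw [mem_W, this, hK] at hL
      cases K with
      | nil => simp at hL
      | cons z K' =>
        have hz : z = (i, false) := by simpa using hL
        have hR := (List.isChain_cons_cons.mp hch).1
        rw [hz] at hR
        simpa using hR rfl
  · intro hu
    have h : u.toWord.head? ≠ some (i, !false) := by
      simpa [W, Set.mem_setOf_eq] using hu
    rw [mem_W, inv_of_eq, cons_mul (σ := (i, false)) h]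
    rfl

lemma image_mul_W (i : Bool) :
    (fun w => FreeGroup.of i * w) '' W (i, false) = (W (i, true))ᶜ := by
  ext u
  simp only [Set.mem_image, Set.mem_compl_iff]
  constructor
  · rintro ⟨v, hv, rfl⟩
    have : (FreeGroup.of i)⁻¹ * (FreeGroup.of i * v) = v := by group
    rw [← mem_W_iff]
    rw [this]; exact hv
  · intro hu
    exact ⟨(FreeGroup.of i)⁻¹ * u, (mem_W_iff i u).mpr hu, by group⟩

lemma image_mul_C : (fun w => a0 * w) '' Cset = insert a0 Cset := by
  ext u
  simp only [Set.mem_image, Set.mem_insert_iff]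
  constructor
  · rintro ⟨v, ⟨n, rfl⟩, rfl⟩
    cases n with
    | zero => left; simp
    | succ m =>
      right
      refine ⟨m, ?_⟩
      rw [pow_succ', ← mul_assoc, mul_inv_cancel, one_mul]
  · rintro (rfl | ⟨n, rfl⟩)
    · exact ⟨1, ⟨0, by simp⟩, mul_one a0⟩
    · exact ⟨a0⁻¹ ^ (n+1), ⟨n+1, rfl⟩, by rw [pow_succ', ← mul_assoc, mul_inv_cancel, one_mul]⟩

def SA1 : Set F2 := W (true, true) ∪ Cset
def SA2 : Set F2 := W (true, false) \ Cset
def SB1 : Set F2 := W (false, true)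
def SB2 : Set F2 := W (false, false)

lemma mem_C_head {w : F2} (h : w ∈ Cset) :
    w.toWord.head? = none ∨ w.toWord.head? = some (true, false) := by
  obtain ⟨n, rfl⟩ := h
  rw [toWord_a0_inv_pow]
  cases n with
  | zero => left; rfl
  | succ m => right; simp [List.replicate_succ]

lemma a0_mem_W : a0 ∈ W (true, true) := by
  show (FreeGroup.of true).toWord.head? = _
  rw [FreeGroup.toWord_of]; rfl

lemma cover : SA1 ∪ SA2 ∪ SB1 ∪ SB2 = Set.univ := by
  ext w
  simp only [Set.mem_union, Set.mem_univ, iff_true, SA1, SA2, SB1, SB2, Set.mem_diff]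
  by_cases hC : w ∈ Cset
  · tauto
  cases hT : w.toWord with
  | nil =>
    exact absurd ⟨0, by rw [pow_zero]; exact (FreeGroup.toWord_eq_nil_iff.mp hT).symm ▸ rfl⟩ hC
  | cons y K =>
    have hW : w ∈ W y := by rw [mem_W, hT]; rfl
    obtain ⟨i, b⟩ := y
    cases i <;> cases b <;> tauto

lemma W_disj {σ τ : Ltr} (h : σ ≠ τ) : Disjoint (W σ) (W τ) := by
  rw [Set.disjoint_left]
  intro w h1 h2
  rw [mem_W] at h1 h2
  rw [h1] at h2
  exact h (Option.some_injective _ h2)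

lemma C_W_disj {σ : Ltr} (h : σ ≠ (true, false)) : Disjoint Cset (W σ) := by
  rw [Set.disjoint_left]
  intro w h1 h2
  rw [mem_W] at h2
  rcases mem_C_head h1 with h3 | h3 <;> rw [h3] at h2
  · exact (Option.some_ne_none _ h2.symm).elim
  · exact h (Option.some_injective _ h2.symm)

lemma image_A : (fun w => a0 * w) '' SA2 = Set.univ \ SA1 := by
  have hinj : Function.Injective (fun w : F2 => a0 * w) := fun x y h => by
    simpa using mul_left_cancel h
  rw [SA2, Set.image_diff hinj, image_mul_C]
  show (fun w => FreeGroup.of true * w) '' W (true, false) \ _ = _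
  rw [image_mul_W]
  ext u
  simp only [Set.mem_diff, Set.mem_compl_iff, Set.mem_univ, true_and, SA1, Set.mem_union,
    Set.mem_insert_iff]
  constructor
  · rintro ⟨h1, h2⟩
    push_neg at h2
    exact fun h => h.elim h1 h2.2
  · intro h
    push_neg at h
    refine ⟨h.1, ?_⟩
    rintro (rfl | hC)
    · exact h.1 a0_mem_W
    · exact h.2 hC

lemma image_B : (fun w => b0 * w) '' SB2 = Set.univ \ SB1 := by
  rw [SB2, SB1]
  show (fun w => FreeGroup.of false * w) '' W (false, false) = _
  rw [image_mul_W]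
  ext u; simp
abbrev Sph : Set E3 := Metric.sphere (0 : E3) 1

def dotP (u v : E3) : ℝ := u 0 * v 0 + u 1 * v 1 + u 2 * v 2

lemma mem_sphere_dot (x : E3) : x ∈ Sph ↔ dotP x x = 1 := by
  rw [mem_sphere_zero_iff_norm, EuclideanSpace.norm_eq]
  rw [show (Finset.univ.sum fun i => ‖x i‖ ^ 2) = dotP x x by
    simp [Fin.sum_univ_three, dotP, sq, Real.norm_eq_abs, abs_mul_abs_self]]
  constructor
  · intro h
    have h0 : (0:ℝ) ≤ dotP x x := by
      rw [show dotP x x = x 0 * x 0 + x 1 * x 1 + x 2 * x 2 from rfl]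
      nlinarith [sq_nonneg (x 0), sq_nonneg (x 1), sq_nonneg (x 2)]
    nlinarith [Real.sq_sqrt h0, Real.sqrt_nonneg (dotP x x)]
  · intro h; rw [h]; exact Real.sqrt_one

lemma dot_mulVec (A : Matrix (Fin 3) (Fin 3) ℝ) (hA : Aᵀ * A = 1) (u v : E3) :
    dotP (WithLp.toLp 2 (A.mulVec u)) (WithLp.toLp 2 (A.mulVec v)) = dotP u v := by
  have h : ∀ i j, (Aᵀ * A) i j = (1 : Matrix (Fin 3) (Fin 3) ℝ) i j := fun i j => by rw [hA]
  have h00 := h 0 0; have h01 := h 0 1; have h02 := h 0 2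
  have h10 := h 1 0; have h11 := h 1 1; have h12 := h 1 2
  have h20 := h 2 0; have h21 := h 2 1; have h22 := h 2 2
  simp only [Matrix.mul_apply, Fin.sum_univ_three, Matrix.transpose_apply, Matrix.one_apply] at *
  simp only [dotP, PiLp.toLp_apply, Matrix.mulVec, dotProduct, Fin.sum_univ_three]
  norm_num [Fin.ext_iff] at h00 h01 h02 h10 h11 h12 h20 h21 h22
  linear_combination u 0 * v 0 * h00 + u 0 * v 1 * h01 + u 0 * v 2 * h02 + u 1 * v 0 * h10 +
    u 1 * v 1 * h11 + u 1 * v 2 * h12 + u 2 * v 0 * h20 + u 2 * v 1 * h21 + u 2 * v 2 * h22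

lemma so3_transpose_mul (g : SO3) : g.1ᵀ * g.1 = 1 := by
  have h := Matrix.mem_unitaryGroup_iff'.mp g.2.1
  rwa [Matrix.star_eq_conjTranspose, Matrix.conjTranspose_eq_transpose_of_trivial] at h

lemma so3_mul_transpose (g : SO3) : g.1 * g.1ᵀ = 1 :=
  mul_eq_one_comm.mp (so3_transpose_mul g)

lemma smul_mem_sphere (g : SO3) {x : E3} (hx : x ∈ Sph) : g • x ∈ Sph := by
  rw [mem_sphere_dot] at hx ⊢
  show dotP (WithLp.toLp 2 (g.1.mulVec x)) (WithLp.toLp 2 (g.1.mulVec x)) = 1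
  rw [dot_mulVec g.1 (so3_transpose_mul g)]
  exact hx

def cr (u v : E3) : E3 :=
  WithLp.toLp 2 ![u 1 * v 2 - u 2 * v 1, u 2 * v 0 - u 0 * v 2, u 0 * v 1 - u 1 * v 0]

lemma transpose_cross (M : Matrix (Fin 3) (Fin 3) ℝ) (u v : E3) :
    WithLp.toLp 2 (Mᵀ.mulVec (cr (WithLp.toLp 2 (M.mulVec u)) (WithLp.toLp 2 (M.mulVec v)))) =
      M.det • cr u v := by
  ext i
  rw [Matrix.det_fin_three]
  fin_cases i <;>
    simp [cr, Matrix.mulVec, dotProduct, Fin.sum_univ_three, Matrix.transpose_apply,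
      Matrix.vecHead, Matrix.vecTail] <;> ring

lemma lagrange (u v : E3) :
    dotP (cr u v) (cr u v) + dotP u v ^ 2 = dotP u u * dotP v v := by
  simp [cr, dotP, Matrix.vecHead, Matrix.vecTail]; ring

lemma det_rows (u v : E3) :
    (Matrix.of ![WithLp.ofLp u, WithLp.ofLp v, WithLp.ofLp (cr u v)]).det = dotP (cr u v) (cr u v) := by
  rw [Matrix.det_fin_three]
  simp [cr, dotP, Matrix.vecHead, Matrix.vecTail]; ring

lemma eq_of_dot_one {p q : E3} (hp : p ∈ Sph) (hq : q ∈ Sph) (h : dotP p q = 1) : p = q := by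
  rw [mem_sphere_dot] at hp hq
  have h0 : (p 0 - q 0)^2 + (p 1 - q 1)^2 + (p 2 - q 2)^2 = 0 := by
    simp only [dotP] at hp hq h; ring_nf; nlinarith [hp, hq, h]
  have e0 : p 0 = q 0 := by nlinarith [sq_nonneg (p 0 - q 0), sq_nonneg (p 1 - q 1), sq_nonneg (p 2 - q 2)]
  have e1 : p 1 = q 1 := by nlinarith [sq_nonneg (p 0 - q 0), sq_nonneg (p 1 - q 1), sq_nonneg (p 2 - q 2)]
  have e2 : p 2 = q 2 := by nlinarith [sq_nonneg (p 0 - q 0), sq_nonneg (p 1 - q 1), sq_nonneg (p 2 - q 2)]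
  ext i
  fin_cases i
  · exact e0
  · exact e1
  · exact e2

lemma eq_neg_of_dot_neg_one {p q : E3} (hp : p ∈ Sph) (hq : q ∈ Sph) (h : dotP p q = -1) :
    q = -p := by
  rw [mem_sphere_dot] at hp hq
  have h0 : (p 0 + q 0)^2 + (p 1 + q 1)^2 + (p 2 + q 2)^2 = 0 := by
    simp only [dotP] at hp hq h; ring_nf; nlinarith [hp, hq, h]
  have e0 : q 0 = -(p 0) := by nlinarith [sq_nonneg (p 0 + q 0), sq_nonneg (p 1 + q 1), sq_nonneg (p 2 + q 2)]
  have e1 : q 1 = -(p 1) := by nlinarith [sq_nonneg (p 0 + q 0), sq_nonneg (p 1 + q 1), sq_nonneg (p 2 + q 2)]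
  have e2 : q 2 = -(p 2) := by nlinarith [sq_nonneg (p 0 + q 0), sq_nonneg (p 1 + q 1), sq_nonneg (p 2 + q 2)]
  ext i
  fin_cases i
  · exact e0
  · exact e1
  · exact e2

lemma so3_eq_one_of_two_fixed {g : SO3} {p q : E3} (hp : p ∈ Sph) (hq : q ∈ Sph)
    (hfp : g • p = p) (hfq : g • q = q) (hpq : q ≠ p) (hpq' : q ≠ -p) : g = 1 := by
  have hfp' : WithLp.toLp 2 (g.1.mulVec p) = p := hfp
  have hfq' : WithLp.toLp 2 (g.1.mulVec q) = q := hfq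
  have hd1 : dotP p q ≠ 1 := fun h => hpq (eq_of_dot_one hp hq h).symm
  have hd2 : dotP p q ≠ -1 := fun h => hpq' (eq_neg_of_dot_neg_one hp hq h)
  have hcc : dotP (cr p q) (cr p q) ≠ 0 := by
    have hl := lagrange p q
    rw [(mem_sphere_dot p).mp hp, (mem_sphere_dot q).mp hq] at hl
    intro h0
    rw [h0] at hl
    have : (1 - dotP p q) * (1 + dotP p q) = 0 := by nlinarith [hl]
    rcases mul_eq_zero.mp this with h | h
    · exact hd1 (by linarith)
    · exact hd2 (by linarith)
  have hdet : g.1.det = 1 := g.2.2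
  have hcr : WithLp.toLp 2 (g.1.mulVec (cr p q)) = cr p q := by
    have h1 : WithLp.toLp 2 (g.1ᵀ.mulVec (cr p q)) = cr p q := by
      have := transpose_cross g.1 p q
      rw [hfp', hfq', hdet, one_smul] at this
      exact this
    calc WithLp.toLp 2 (g.1.mulVec (cr p q))
        = WithLp.toLp 2 (g.1.mulVec (WithLp.toLp 2 (g.1ᵀ.mulVec (cr p q)))) := by rw [h1]
    _ = WithLp.toLp 2 ((g.1 * g.1ᵀ).mulVec (cr p q)) := by
        rw [WithLp.ofLp_toLp, Matrix.mulVec_mulVec]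
    _ = cr p q := by rw [so3_mul_transpose, Matrix.one_mulVec, WithLp.toLp_ofLp]
  -- the matrix with columns p q (cr p q)
  set N : Matrix (Fin 3) (Fin 3) ℝ :=
    (Matrix.of ![WithLp.ofLp p, WithLp.ofLp q, WithLp.ofLp (cr p q)])ᵀ with hN
  have hfix : ∀ j : Fin 3,
      g.1.mulVec ((Matrix.of ![WithLp.ofLp p, WithLp.ofLp q, WithLp.ofLp (cr p q)]) j) =
        (Matrix.of ![WithLp.ofLp p, WithLp.ofLp q, WithLp.ofLp (cr p q)]) j := by
    intro j
    fin_cases j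
    · exact congrArg WithLp.ofLp hfp'
    · exact congrArg WithLp.ofLp hfq'
    · exact congrArg WithLp.ofLp hcr
  have hgN : g.1 * N = N := by
    ext i j
    rw [Matrix.mul_apply]
    have := congrFun (hfix j) i
    simp only [Matrix.mulVec, dotProduct, Fin.sum_univ_three] at this
    simp only [hN, Matrix.transpose_apply, Matrix.mul_apply, Fin.sum_univ_three]
    exact this
  have hdetN : IsUnit N.det := by
    rw [hN, Matrix.det_transpose, det_rows]
    exact Ne.isUnit hcc
  have : g.1 = 1 := by
    calc g.1 = g.1 * (N * N⁻¹) := by rw [Matrix.mul_nonsing_inv N hdetN, mul_one]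
    _ = (g.1 * N) * N⁻¹ := by rw [mul_assoc]
    _ = N * N⁻¹ := by rw [hgN]
    _ = 1 := Matrix.mul_nonsing_inv N hdetN
  exact Subtype.ext this

lemma fix_countable (g : SO3) (hg : g ≠ 1) : {x : E3 | x ∈ Sph ∧ g • x = x}.Countable := by
  by_cases hne : {x : E3 | x ∈ Sph ∧ g • x = x}.Nonempty
  · obtain ⟨p, hp, hfp⟩ := hne
    have hsub : {x : E3 | x ∈ Sph ∧ g • x = x} ⊆ {p, -p} := by
      rintro q ⟨hq, hfq⟩
      by_contra hmem
      simp only [Set.mem_insert_iff, Set.mem_singleton_iff] at hmem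
      push_neg at hmem
      exact hg (so3_eq_one_of_two_fixed hp hq hfp hfq hmem.1 hmem.2)
    exact (Set.countable_insert.mpr (Set.countable_singleton _)).mono hsub
  · rw [Set.not_nonempty_iff_eq_empty] at hne
    rw [hne]; exact Set.countable_empty
instance : Countable F2 := FreeGroup.toWord_injective.countable

def Dst : Set E3 := {x | x ∈ Sph ∧ ∃ w : F2, w ≠ 1 ∧ φ w • x = x}

lemma D_countable : Dst.Countable := by
  have : Dst ⊆ ⋃ (w : F2), {x : E3 | x ∈ Sph ∧ w ≠ 1 ∧ φ w • x = x} := by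
    rintro x ⟨hx, w, hw, hfix⟩
    exact Set.mem_iUnion.mpr ⟨w, hx, hw, hfix⟩
  refine Set.Countable.mono this ?_
  apply Set.countable_iUnion
  intro w
  by_cases hw : w = 1
  · subst hw
    have : {x : E3 | x ∈ Sph ∧ (1:F2) ≠ 1 ∧ φ 1 • x = x} = ∅ := by
      ext x; simp
    rw [this]; exact Set.countable_empty
  · have hφ : φ w ≠ 1 := by
      intro h
      exact hw (φ_inj (h.trans (map_one φ).symm))
    refine (fix_countable (φ w) hφ).mono ?_
    rintro x ⟨hx, _, hfix⟩
    exact ⟨hx, hfix⟩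

def Xs : Set E3 := Sph \ Dst

lemma X_inv {x : E3} (hx : x ∈ Xs) (w : F2) : φ w • x ∈ Xs := by
  obtain ⟨hs, hd⟩ := hx
  refine ⟨smul_mem_sphere _ hs, ?_⟩
  rintro ⟨_, u, hu, hfix⟩
  apply hd
  refine ⟨hs, w⁻¹ * u * w, ?_, ?_⟩
  · intro h
    apply hu
    have : u * w = w := by
      have := congrArg (fun z => w * z) h
      simpa [mul_assoc] using this
    exact mul_right_cancel (by rw [this, one_mul])
  · rw [_root_.map_mul, _root_.map_mul, mul_smul, mul_smul, hfix, map_inv,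
      inv_smul_smul]

def rel (x y : E3) : Prop := ∃ w : F2, φ w • x = y

lemma rel_equiv : Equivalence rel := by
  constructor
  · intro x; exact ⟨1, by rw [_root_.map_one, one_smul]⟩
  · rintro x y ⟨w, rfl⟩
    exact ⟨w⁻¹, by rw [map_inv, inv_smul_smul]⟩
  · rintro x y z ⟨w, rfl⟩ ⟨u, rfl⟩
    exact ⟨u * w, by rw [_root_.map_mul, mul_smul]⟩

def sE : Setoid E3 := ⟨rel, rel_equiv⟩

def rp (x : E3) : E3 := (Quotient.mk sE x).out

lemma rp_rel (x : E3) : rel (rp x) x :=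
  Quotient.exact (Quotient.out_eq (Quotient.mk sE x))

lemma rp_eq {x y : E3} (h : rel x y) : rp x = rp y :=
  congrArg Quotient.out (Quotient.sound (a := x) (b := y) h)

def Mst : Set E3 := rp '' Xs

lemma Mst_sub : Mst ⊆ Xs := by
  rintro _ ⟨x, hx, rfl⟩
  obtain ⟨w, hw⟩ := rp_rel x
  have : φ w⁻¹ • x = rp x := by
    rw [map_inv]
    exact (inv_smul_eq_iff.mpr hw.symm)
  rw [← this]
  exact X_inv hx w⁻¹

def Pi2 (T : Set F2) : Set E3 := {x | ∃ w ∈ T, ∃ m ∈ Mst, φ w • m = x}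

lemma Pi2_sub (T : Set F2) : Pi2 T ⊆ Xs := by
  rintro _ ⟨w, _, m, hm, rfl⟩
  exact X_inv (Mst_sub hm) w

lemma Pi2_univ : Pi2 Set.univ = Xs := by
  apply Set.Subset.antisymm (Pi2_sub _)
  intro x hx
  obtain ⟨w, hw⟩ := rp_rel x
  exact ⟨w, trivial, rp x, ⟨x, hx, rfl⟩, hw⟩

lemma Pi2_union (S T : Set F2) : Pi2 (S ∪ T) = Pi2 S ∪ Pi2 T := by
  ext x
  constructor
  · rintro ⟨w, hw | hw, m, hm, rfl⟩
    · exact Or.inl ⟨w, hw, m, hm, rfl⟩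
    · exact Or.inr ⟨w, hw, m, hm, rfl⟩
  · rintro (⟨w, hw, m, hm, rfl⟩ | ⟨w, hw, m, hm, rfl⟩)
    · exact ⟨w, Or.inl hw, m, hm, rfl⟩
    · exact ⟨w, Or.inr hw, m, hm, rfl⟩

lemma Pi2_disj {S T : Set F2} (h : Disjoint S T) : Disjoint (Pi2 S) (Pi2 T) := by
  rw [Set.disjoint_left]
  rintro x ⟨w, hw, m, hm, rfl⟩ ⟨u, hu, m', hm', heq⟩
  -- φ w • m = φ u • m'
  have hrel : rel m m' := by
    refine ⟨u⁻¹ * w, ?_⟩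
    rw [_root_.map_mul, mul_smul, map_inv]
    rw [← heq]
    exact inv_smul_smul _ _
  have hmm : m = m' := by
    obtain ⟨x₀, hx₀, rfl⟩ := hm
    obtain ⟨x₁, hx₁, rfl⟩ := hm'
    apply rp_eq
    have h1 : rel x₀ (rp x₀) := rel_equiv.symm (rp_rel x₀)
    have h2 : rel (rp x₁) x₁ := rp_rel x₁
    exact rel_equiv.trans h1 (rel_equiv.trans hrel h2)
  subst hmm
  have hfix : φ (u⁻¹ * w) • m = m := by
    obtain ⟨v, hv⟩ := hrel
    rw [_root_.map_mul, mul_smul, map_inv, ← heq, inv_smul_smul]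
  have hXm := Mst_sub hm
  have : u⁻¹ * w = 1 := by
    by_contra hne
    exact hXm.2 ⟨hXm.1, u⁻¹ * w, hne, hfix⟩
  have : w = u := by
    have := congrArg (fun z => u * z) this
    simpa [← mul_assoc] using this
  subst this
  exact (Set.disjoint_left.mp h hw) hu

lemma smul_Pi2 (u : F2) (T : Set F2) :
    @HSMul.hSMul SO3 (Set E3) (Set E3) (@instHSMul _ _ (@Set.smulSet SO3 E3 SemigroupAction.toSMul))
      (φ u) (Pi2 T) = Pi2 ((fun w => u * w) '' T) := by
  ext x
  rw [Set.mem_smul_set]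
  constructor
  · rintro ⟨y, ⟨w, hw, m, hm, rfl⟩, rfl⟩
    exact ⟨u * w, ⟨w, hw, rfl⟩, m, hm, by rw [_root_.map_mul, mul_smul]⟩
  · rintro ⟨_, ⟨w, hw, rfl⟩, m, hm, rfl⟩
    exact ⟨φ w • m, ⟨w, hw, m, hm, rfl⟩, by rw [_root_.map_mul, mul_smul]⟩

lemma X_nonempty : Xs.Nonempty := by
  by_contra hne
  rw [Set.not_nonempty_iff_eq_empty, Xs, Set.diff_eq_empty] at hne
  have hSc : Sph.Countable := D_countable.mono hne
  set f : ℝ → E3 := fun t => WithLp.toLp 2 ![Real.cos t, Real.sin t, 0] with hf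
  have hmaps : Set.MapsTo f (Set.Icc 0 Real.pi) Sph := by
    intro t _
    rw [mem_sphere_dot]
    show Real.cos t * Real.cos t + Real.sin t * Real.sin t + 0 * 0 = 1
    nlinarith [Real.sin_sq_add_cos_sq t]
  have hinj : Set.InjOn f (Set.Icc 0 Real.pi) := by
    intro s hs t ht hst
    apply Real.injOn_cos hs ht
    exact congrArg (· 0) hst
  have := (hmaps.countable_of_injOn hinj hSc)
  have hunc : ¬ (Set.Icc (0:ℝ) Real.pi).Countable := by
    intro hc
    have hlt : (0:ℝ) < Real.pi := Real.pi_pos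
    have := hc.le_aleph0
    rw [Cardinal.mk_Icc_real hlt] at this
    exact absurd this (by simp [Cardinal.aleph0_lt_continuum.not_ge])
  exact hunc this
lemma pair2 {α : Type*} {P : Fin 2 → Set α} (h : Disjoint (P 0) (P 1)) :
    Pairwise (Function.onFun Disjoint P) := by
  intro i j hij
  fin_cases i <;> fin_cases j <;> simp_all [Function.onFun]
  all_goals first | exact h | exact h.symm

lemma iUnion2 {α : Type*} (P : Fin 2 → Set α) : (⋃ i, P i) = P 0 ∪ P 1 := by
  ext x
  simp [Set.mem_iUnion, Fin.exists_fin_two]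

lemma equidecomp_side {S1 S2 : Set F2} {u : F2}
    (himg : (fun w => u * w) '' S2 = Set.univ \ S1) (hd : Disjoint S1 S2) :
    Equidecomposable SO3 (Pi2 S1 ∪ Pi2 S2) Xs := by
  refine ⟨2, ![Pi2 S1, Pi2 S2], ![1, φ u], ?_, ?_, ?_, ?_⟩
  · exact pair2 (by simpa using Pi2_disj hd)
  · rw [iUnion2]; rfl
  · apply pair2
    simp only [Matrix.cons_val_zero, Matrix.cons_val_one, Matrix.head_cons]
    erw [one_smul, smul_Pi2, himg]
    exact Pi2_disj (Set.disjoint_sdiff_right)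
  · rw [iUnion2]
    simp only [Matrix.cons_val_zero, Matrix.cons_val_one, Matrix.head_cons]
    erw [one_smul, smul_Pi2, himg, ← Pi2_union, Set.union_diff_self, Set.union_univ, Pi2_univ]

lemma sphere_paradox : Paradoxical SO3 Xs := by
  refine ⟨X_nonempty, Pi2 (SA1 ∪ SA2), Pi2 (SB1 ∪ SB2), ?_, ?_, ?_, ?_⟩
  · rw [← Pi2_union]
    have : SA1 ∪ SA2 ∪ (SB1 ∪ SB2) = Set.univ := by
      rw [← cover]; ac_rfl
    rw [this, Pi2_univ]
  · apply Pi2_disj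
    have d1 : Disjoint SA1 SB1 := by
      apply Set.disjoint_union_left.mpr
      exact ⟨W_disj (by decide), C_W_disj (by decide)⟩
    have d2 : Disjoint SA1 SB2 := by
      apply Set.disjoint_union_left.mpr
      exact ⟨W_disj (by decide), C_W_disj (by decide)⟩
    have d3 : Disjoint SA2 SB1 := (W_disj (by decide)).mono_left Set.diff_subset
    have d4 : Disjoint SA2 SB2 := (W_disj (by decide)).mono_left Set.diff_subset
    rw [Set.disjoint_union_left]
    constructor <;> rw [Set.disjoint_union_right]
    · exact ⟨d1, d2⟩
    · exact ⟨d3, d4⟩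
  · rw [Pi2_union]
    exact equidecomp_side image_A (by
      apply Set.disjoint_union_left.mpr
      exact ⟨(W_disj (by decide)).mono_right Set.diff_subset, Set.disjoint_sdiff_right⟩ )
  · rw [Pi2_union]
    exact equidecomp_side image_B (W_disj (by decide))

/-- The Hausdorff paradox: there is a countable subset `D` of the unit sphere `S²` such
that `S² \ D` is `SO(3)`-paradoxical. -/
theorem hausdorff_paradox :
    ∃ D : Set E3, D.Countable ∧ D ⊆ Metric.sphere (0 : E3) 1 ∧
      Paradoxical SO3 (Metric.sphere (0 : E3) 1 \ D) := by
  exact ⟨Dst, D_countable, fun x hx => hx.1, sphere_paradox⟩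

end
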